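/- In a graded Lie algebra, suppose ω₁, ω₂, and P = Σ_{k≥1} ε^{2k} P^{(2k)} (formal series) satisfy: [ω₁,ω₁] = [ω₂,ω₂] = [ω₁,ω₂] = 0, [ω₂ + P, ω₂ + P] = 0, and e satisfies [e,ω₁] = 0, [e,ω₂] = ω₁. If [e, P^{(2k)}] = 0 for k = 1,...,N, then the element X = [e, P^{(2N+2)}] satisfies [ω₁, X] = 0 and [ω₂, X] = 0. -/
import Mathlib


open scoped BigOperators

/-- graded Lie algebra setting, with `V` the (even) degree of vector
fields, `B` that of bivectors, `T` that of trivectors; `adVB`/`adVT` is the bracket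
(Lie derivative) `[v, ·]` on bivectors/trivectors, and `br` is the (symmetric, in the
Schouten convention for odd elements) bracket of two bivectors. If
`[ω₁,ω₁] = [ω₂,ω₂] = [ω₁,ω₂] = 0`, `[e,ω₁] = 0`, `[e,ω₂] = ω₁`, the deformed structure
`ω₂ + ∑_{k≥1} ε^{2k} P^{(2k)}` is Poisson for the pencil (conditions `hP1`, `horder`,
order by order in `ε`), and `[e, P^{(2k)}] = 0` for `k = 1, …, N`, then
`X = [e, P^{(2N+2)}]` satisfies `[ω₁, X] = 0` and `[ω₂, X] = 0`. -/
theorem stmt15 (V B T : Type*)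
    [AddCommGroup V] [Module ℝ V] [AddCommGroup B] [Module ℝ B]
    [AddCommGroup T] [Module ℝ T]
    (adVB : V →ₗ[ℝ] B →ₗ[ℝ] B) (adVT : V →ₗ[ℝ] T →ₗ[ℝ] T)
    (br : B →ₗ[ℝ] B →ₗ[ℝ] T)
    -- Schouten bracket of two bivectors is symmetric
    (hsym : ∀ b₁ b₂ : B, br b₁ b₂ = br b₂ b₁)
    -- graded Jacobi identity: [v,[b₁,b₂]] = [[v,b₁],b₂] + [b₁,[v,b₂]]
    (hjac : ∀ (z : V) (b₁ b₂ : B),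
      adVT z (br b₁ b₂) = br (adVB z b₁) b₂ + br b₁ (adVB z b₂))
    (ω₁ ω₂ : B) (e : V) (P : ℕ → B) (N : ℕ)
    (h11 : br ω₁ ω₁ = 0) (h22 : br ω₂ ω₂ = 0) (h12 : br ω₁ ω₂ = 0)
    (he1 : adVB e ω₁ = 0) (he2 : adVB e ω₂ = ω₁)
    -- the deformation is compatible with ω₁: [ω₁, P^{(2m)}] = 0
    (hP1 : ∀ m, 1 ≤ m → br ω₁ (P m) = 0)
    -- [ω₂ + P, ω₂ + P] = 0 at order ε^{2m}:
    -- 2[ω₂, P^{(2m)}] + ∑_{k=1}^{m-1} [P^{(2k)}, P^{(2m-2k)}] = 0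
    (horder : ∀ m, 1 ≤ m →
      (2 : ℝ) • br ω₂ (P m) + ∑ k ∈ Finset.Ico 1 m, br (P k) (P (m - k)) = 0)
    -- exactness up to order 2N: [e, P^{(2k)}] = 0, k = 1, …, N
    (heP : ∀ k, 1 ≤ k → k ≤ N → adVB e (P k) = 0) :
    br ω₁ (adVB e (P (N + 1))) = 0 ∧ br ω₂ (adVB e (P (N + 1))) = 0 := by
  have h1 : br ω₁ (adVB e (P (N + 1))) = 0 := by
    have hj := hjac e ω₁ (P (N + 1))
    rw [hP1 (N+1) (by omega), he1, map_zero] at hj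
    simpa using hj.symm
  refine ⟨h1, ?_⟩
  have key := congrArg (adVT e) (horder (N+1) (by omega))
  rw [map_add, map_smul, map_zero] at key
  have hj := hjac e ω₂ (P (N + 1))
  rw [he2, hP1 (N+1) (by omega), zero_add] at hj
  have hsum : adVT e (∑ k ∈ Finset.Ico 1 (N+1), br (P k) (P (N + 1 - k))) = 0 := by
    rw [map_sum]
    apply Finset.sum_eq_zero
    intro k hk
    simp only [Finset.mem_Ico] at hk
    rw [hjac, heP k hk.1 (by omega), heP (N+1-k) (by omega) (by omega)]
    simp
  rw [hj, hsum, add_zero] at key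
  have : (2:ℝ) ≠ 0 := by norm_num
  exact (smul_eq_zero.mp key).resolve_left this
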